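/- Let n ≥ 1 and let φ : ℝ → (0,∞) be a solution of φ^{n-1} φ' e^φ = e^{nt} with φ(t) → 0 as t → -∞. Then φ(t) - φ'(t) > 0 for all t ∈ ℝ. -/

import Mathlib

open Filter Real

/-- If `φ : ℝ → (0,∞)` is a differentiable solution of
`φ^{n-1} φ' e^φ = e^{nt}` with `φ → 0` as `t → -∞`, then `φ - φ' > 0` on `ℝ`. -/
theorem stmt_4 (n : ℕ) (hn : 1 ≤ n) (φ : ℝ → ℝ)
    (hpos : ∀ t, 0 < φ t) (hdiff : Differentiable ℝ φ)
    (hode : ∀ t : ℝ, φ t ^ (n - 1) * deriv φ t * Real.exp (φ t) = Real.exp (n * t))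
    (hlim : Tendsto φ atBot (nhds 0)) :
    ∀ t : ℝ, 0 < φ t - deriv φ t := by
  have hnpos : (0:ℝ) < n := by exact_mod_cast hn
  set f : ℝ → ℝ := fun s => s ^ (n - 1) * Real.exp s with hf
  have hfc : Continuous f := (continuous_pow _).mul Real.continuous_exp
  set F : ℝ → ℝ := fun x => ∫ s in (0:ℝ)..x, f s with hF
  have hFd : ∀ x : ℝ, HasDerivAt F (f x) x := fun x =>
    intervalIntegral.integral_hasDerivAt_right
      (hfc.intervalIntegrable _ _) (hfc.stronglyMeasurableAtFilter _ _) hfc.continuousAt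
  have hF0 : F 0 = 0 := intervalIntegral.integral_same
  -- derivative of t ↦ exp (n*t) / n
  have hE : ∀ t : ℝ, HasDerivAt (fun t => Real.exp (n * t) / n) (Real.exp (n * t)) t := by
    intro t
    have h1 : HasDerivAt (fun t : ℝ => (n:ℝ) * t) (n:ℝ) t := by
      simpa using (hasDerivAt_id t).const_mul (n:ℝ)
    have h2 := (Real.hasDerivAt_exp ((n:ℝ) * t)).comp t h1
    have h3 := h2.div_const (n:ℝ)
    refine h3.congr_deriv ?_
    field_simp
  -- g := F ∘ φ - exp(n t)/n has derivative 0
  set g : ℝ → ℝ := fun t => F (φ t) - Real.exp (n * t) / n with hg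
  have hgd : ∀ t : ℝ, HasDerivAt g 0 t := by
    intro t
    have h1 := ((hFd (φ t)).comp t (hdiff t).hasDerivAt).sub (hE t)
    refine h1.congr_deriv ?_
    have := hode t
    simp only [hf] at *
    rw [← this]
    ring
  have hgc : ∀ s t : ℝ, g s = g t :=
    is_const_of_deriv_eq_zero (fun t => (hgd t).differentiableAt) (fun t => (hgd t).deriv)
  -- g → 0 at -∞
  have hg0 : ∀ t, g t = 0 := by
    have h1 : Tendsto (fun t => F (φ t)) atBot (nhds 0) := by
      have := ((hFd 0).continuousAt.tendsto).comp hlim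
      simpa [hF0, Function.comp_def] using this
    have h2 : Tendsto (fun t : ℝ => Real.exp (n * t) / n) atBot (nhds 0) := by
      have : Tendsto (fun t : ℝ => (n:ℝ) * t) atBot atBot :=
        (tendsto_id.const_mul_atBot hnpos)
      have := (Real.tendsto_exp_atBot).comp this
      simpa using this.div_const (n:ℝ)
    have h3 : Tendsto g atBot (nhds 0) := by simpa using h1.sub h2
    intro t
    have h4 : Tendsto g atBot (nhds (g t)) := by
      have : g = fun _ => g t := funext fun s => hgc s t
      rw [this]; exact tendsto_const_nhds
    exact tendsto_nhds_unique h4 h3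
  -- hence n * F (φ t) = exp (n t)
  have hkey : ∀ t : ℝ, (n:ℝ) * F (φ t) = Real.exp (n * t) := by
    intro t
    have := hg0 t
    simp only [hg] at this
    have : F (φ t) = Real.exp (n * t) / n := by linarith
    rw [this]; field_simp
  -- the inequality n F x < x^n e^x for x > 0
  have hineq : ∀ x : ℝ, 0 < x → (n:ℝ) * F x < x ^ n * Real.exp x := by
    set H : ℝ → ℝ := fun x => x ^ n * Real.exp x - (n:ℝ) * F x with hH
    have hHd : ∀ x : ℝ, HasDerivAt H (x ^ n * Real.exp x) x := by
      intro x
      have h1 := ((hasDerivAt_pow n x).mul (Real.hasDerivAt_exp x)).sub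
        ((hFd x).const_mul (n:ℝ))
      refine h1.congr_deriv ?_
      simp only [hf]
      ring
    have hmono : StrictMonoOn H (Set.Ici (0:ℝ)) := by
      apply strictMonoOn_of_deriv_pos (convex_Ici 0)
      · exact Continuous.continuousOn (by
          exact continuous_iff_continuousAt.mpr fun x => (hHd x).continuousAt)
      · intro x hx
        rw [interior_Ici] at hx
        rw [(hHd x).deriv]
        exact mul_pos (pow_pos hx n) (Real.exp_pos x)
    intro x hx
    have h0 : H 0 = 0 := by
      simp [hH, hF0, zero_pow (by omega : n ≠ 0)]
    have := hmono (Set.self_mem_Ici) (Set.mem_Ici.mpr hx.le) hx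
    rw [h0] at this
    simp only [hH] at this
    linarith
  -- conclude
  intro t
  have h1 := hineq (φ t) (hpos t)
  rw [hkey t, ← hode t] at h1
  have hpow : φ t ^ n = φ t ^ (n - 1) * φ t := by
    conv_lhs => rw [show n = (n - 1) + 1 by omega]
    rw [pow_succ]
  rw [hpow] at h1
  have hfac : 0 < φ t ^ (n - 1) * Real.exp (φ t) :=
    mul_pos (pow_pos (hpos t) _) (Real.exp_pos _)
  nlinarith [hfac]
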